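/- (Under-segmentation interpolation, Eq. (16)) Let P₀, R₀ ≥ 0 and Q ≥ 1 be integers and set S = P₀ + Q + R₀. Let h : Fin S → ℂ be a spatial channel vector supported on the visibility region, i.e. h(n) = 0 whenever n < P₀ or n ≥ P₀ + Q. Define the Q-point angular representation of the window by h_{a,VR}(m) = Σ_{u=0}^{Q−1} h(P₀ + u)·exp(−2πi·m·u/Q) for m = 0, …, Q−1, and the S-point angular representation of the full vector by h_a(k) = Σ_{n=0}^{S−1} h(n)·exp(−2πi·n·k/S). Then for every k such that exp(2πi·(m/Q − k/S)) ≠ 1 for all m ∈ {0, …, Q−1}, one has h_a(k) = exp(−2πi·k·P₀/S) · Σ_{m=0}^{Q−1} (h_{a,VR}(m)/Q) · (1 − exp(−2πi·k·Q/S)) / (1 − exp(2πi·(m/Q − k/S))). In other words, the angular-domain representation of the under-segmented array is an interpolation of the angular-domain representation of the visibility-region window. -/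

import Mathlib

open Complex

lemma exp_shuffle (a q x y x' y' : ℂ) (h : x + y = x' + y') :
    a * Complex.exp x / q * Complex.exp y = a * Complex.exp x' / q * Complex.exp y' := by
  rw [div_mul_eq_mul_div, div_mul_eq_mul_div, mul_assoc, mul_assoc,
    ← Complex.exp_add, ← Complex.exp_add, h]


lemma ortho_aux (Q : ℕ) (hQ : 0 < Q) (j u : ℕ) (hj : j < Q) (hu : u < Q) :
    ∑ m ∈ Finset.range Q,
      Complex.exp (2 * Real.pi * Complex.I * (m : ℂ) * (((j : ℂ) - u) / Q)) =
    if j = u then (Q : ℂ) else 0 := by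
  have hQc : (Q : ℂ) ≠ 0 := Nat.cast_ne_zero.mpr hQ.ne'
  by_cases hju : j = u
  · subst hju
    simp
  · rw [if_neg hju]
    set w : ℂ := Complex.exp (2 * Real.pi * Complex.I * (((j : ℂ) - u) / Q)) with hw
    have hsum : ∀ m ∈ Finset.range Q, Complex.exp (2 * Real.pi * Complex.I * (m : ℂ) * (((j : ℂ) - u) / Q)) = w ^ m := by
      intro m _
      rw [hw, ← Complex.exp_nat_mul]
      ring_nf
    rw [Finset.sum_congr rfl hsum]
    have h2 : (2 : ℂ) * Real.pi * Complex.I ≠ 0 := by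
      simp [Real.pi_ne_zero, Complex.I_ne_zero]
    have hw1 : w ≠ 1 := by
      intro h1
      rw [hw, Complex.exp_eq_one_iff] at h1
      obtain ⟨n, hn⟩ := h1
      have hx : (2 * (Real.pi : ℂ) * Complex.I) * (((j : ℂ) - u) / Q) =
          (2 * (Real.pi : ℂ) * Complex.I) * n := by linear_combination hn
      have hdiv : ((j : ℂ) - u) / Q = n := mul_left_cancel₀ h2 hx
      have hC : ((j : ℂ) - u) = n * Q := by
        field_simp at hdiv
        linear_combination hdiv
      have hZ : (j : ℤ) - u = n * Q := by exact_mod_cast hC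
      have hQZ : (0 : ℤ) < Q := by exact_mod_cast hQ
      have hjZ : (j : ℤ) < Q := by exact_mod_cast hj
      have huZ : (u : ℤ) < Q := by exact_mod_cast hu
      have hj0 : (0 : ℤ) ≤ j := Int.ofNat_nonneg j
      have hu0 : (0 : ℤ) ≤ u := Int.ofNat_nonneg u
      rcases lt_trichotomy n 0 with hn0 | hn0 | hn0
      · have h1 : n ≤ -1 := by omega
        nlinarith
      · subst hn0
        simp at hZ
        have : (j : ℤ) = u := by linarith
        exact hju (by exact_mod_cast this)
      · have h1 : 1 ≤ n := by omega
        nlinarith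
    have hwQ : w ^ Q = 1 := by
      rw [hw, ← Complex.exp_nat_mul]
      have heq : (Q : ℂ) * (2 * Real.pi * Complex.I * (((j : ℂ) - u) / Q)) =
          (((j : ℤ) - (u : ℤ) : ℤ) : ℂ) * (2 * Real.pi * Complex.I) := by
        push_cast
        field_simp
      rw [heq, Complex.exp_int_mul_two_pi_mul_I]
    rw [geom_sum_eq hw1, hwQ]
    simp

/-- (Under-segmentation interpolation, Eq. (16)) For a spatial channel of length
`S = P₀ + Q + R₀` supported on the visibility region `[P₀, P₀ + Q)`, the `S`-point
angular representation `h_a` is an interpolation of the `Q`-point angular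
representation `h_{a,VR}` of the visibility-region window. -/
theorem under_segmentation_interpolation
    (P0 R0 Q : ℕ) (hQ : 0 < Q) (h : ℕ → ℂ)
    (hsupp : ∀ n, n < P0 + Q + R0 → (n < P0 ∨ P0 + Q ≤ n) → h n = 0)
    (k : ℕ)
    (hk : ∀ m < Q, Complex.exp (2 * Real.pi * Complex.I *
        ((m : ℂ) / (Q : ℂ) - (k : ℂ) / ((P0 + Q + R0 : ℕ) : ℂ))) ≠ 1) :
    (∑ n ∈ Finset.range (P0 + Q + R0),
        h n * Complex.exp (-(2 * Real.pi * Complex.I * (n : ℂ) * (k : ℂ)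
          / ((P0 + Q + R0 : ℕ) : ℂ))))
      = Complex.exp (-(2 * Real.pi * Complex.I * (k : ℂ) * (P0 : ℂ)
          / ((P0 + Q + R0 : ℕ) : ℂ))) *
        ∑ m ∈ Finset.range Q,
          ((∑ u ∈ Finset.range Q,
              h (P0 + u) * Complex.exp (-(2 * Real.pi * Complex.I * (m : ℂ) * (u : ℂ)
                / (Q : ℂ)))) / (Q : ℂ)) *
            (1 - Complex.exp (-(2 * Real.pi * Complex.I * (k : ℂ) * (Q : ℂ)
              / ((P0 + Q + R0 : ℕ) : ℂ)))) /
            (1 - Complex.exp (2 * Real.pi * Complex.I *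
              ((m : ℂ) / (Q : ℂ) - (k : ℂ) / ((P0 + Q + R0 : ℕ) : ℂ)))) := by
  set S : ℕ := P0 + Q + R0 with hSdef
  have hSpos : 0 < S := by omega
  have hSc : ((S : ℕ) : ℂ) ≠ 0 := Nat.cast_ne_zero.mpr hSpos.ne'
  have hQc : (Q : ℂ) ≠ 0 := Nat.cast_ne_zero.mpr hQ.ne'
  set c : ℂ := 2 * (Real.pi : ℂ) * Complex.I with hc
  -- abbreviations
  set z : ℕ → ℂ := fun m => Complex.exp (c * ((m : ℂ) / Q - (k : ℂ) / S)) with hz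
  set e : ℂ := Complex.exp (-(c * (k : ℂ) * (Q : ℂ) / S)) with he
  -- Step 1: LHS reduces to a sum over the visibility window
  have hLHS : (∑ n ∈ Finset.range S, h n * Complex.exp (-(c * (n : ℂ) * (k : ℂ) / S)))
      = ∑ u ∈ Finset.range Q, h (P0 + u) * Complex.exp (-(c * ((P0 + u : ℕ) : ℂ) * (k : ℂ) / S)) := by
    have h1 : ∑ u ∈ Finset.range Q, h (P0 + u) * Complex.exp (-(c * ((P0 + u : ℕ) : ℂ) * (k : ℂ) / S))
        = ∑ n ∈ Finset.Ico P0 (P0 + Q), h n * Complex.exp (-(c * (n : ℂ) * (k : ℂ) / S)) := by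
      rw [Finset.sum_Ico_eq_sum_range]
      simp
    rw [h1]
    refine (Finset.sum_subset ?_ ?_).symm
    · intro x hx
      rw [Finset.mem_Ico] at hx
      rw [Finset.mem_range]
      omega
    · intro x hx hnx
      rw [Finset.mem_range] at hx
      rw [Finset.mem_Ico] at hnx
      rw [hsupp x hx (by omega), zero_mul]
  -- Step 2: geometric sum identity for each m
  have hgeom : ∀ m ∈ Finset.range Q, (1 - e) / (1 - z m) = ∑ j ∈ Finset.range Q, z m ^ j := by
    intro m hm
    rw [Finset.mem_range] at hm
    have hz1 : z m ≠ 1 := hk m hm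
    have hzQ : z m ^ Q = e := by
      rw [hz, ← Complex.exp_nat_mul, he]
      have heq : (Q : ℂ) * (c * ((m : ℂ) / Q - (k : ℂ) / S)) =
          ((m : ℤ) : ℂ) * (2 * (Real.pi : ℂ) * Complex.I) + -(c * (k : ℂ) * (Q : ℂ) / S) := by
        rw [hc]; push_cast; field_simp; ring
      rw [heq, Complex.exp_add, Complex.exp_int_mul_two_pi_mul_I, one_mul]
    rw [geom_sum_eq hz1, hzQ,
      show e - 1 = -(1 - e) by ring, show z m - 1 = -(1 - z m) by ring, neg_div_neg_eq]
  -- Step 3: the big sum computation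
  have key : ∑ m ∈ Finset.range Q,
      ((∑ u ∈ Finset.range Q, h (P0 + u) * Complex.exp (-(c * (m : ℂ) * (u : ℂ) / Q))) / Q)
        * (1 - e) / (1 - z m)
      = ∑ u ∈ Finset.range Q, h (P0 + u) * Complex.exp (-(c * (u : ℂ) * (k : ℂ) / S)) := by
    calc
      ∑ m ∈ Finset.range Q,
          ((∑ u ∈ Finset.range Q, h (P0 + u) * Complex.exp (-(c * (m : ℂ) * (u : ℂ) / Q))) / Q)
            * (1 - e) / (1 - z m)
        = ∑ m ∈ Finset.range Q, ∑ u ∈ Finset.range Q, ∑ j ∈ Finset.range Q,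
            (h (P0 + u) * Complex.exp (-(c * (m : ℂ) * (u : ℂ) / Q)) / Q) * z m ^ j := by
          refine Finset.sum_congr rfl fun m hm => ?_
          rw [mul_div_assoc, hgeom m hm, Finset.mul_sum]
          rw [Finset.sum_comm]
          refine Finset.sum_congr rfl fun j _ => ?_
          rw [Finset.sum_div, Finset.sum_mul]
      _ = ∑ u ∈ Finset.range Q, ∑ j ∈ Finset.range Q, ∑ m ∈ Finset.range Q,
            (h (P0 + u) * Complex.exp (-(c * (m : ℂ) * (u : ℂ) / Q)) / Q) * z m ^ j := by
          rw [Finset.sum_comm]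
          refine Finset.sum_congr rfl fun u _ => Finset.sum_comm
      _ = ∑ u ∈ Finset.range Q, ∑ j ∈ Finset.range Q,
            (h (P0 + u) * Complex.exp (-(c * (j : ℂ) * (k : ℂ) / S)) / Q) *
              (if j = u then (Q : ℂ) else 0) := by
          refine Finset.sum_congr rfl fun u hu => Finset.sum_congr rfl fun j hj => ?_
          rw [Finset.mem_range] at hu hj
          have hstep : ∀ m ∈ Finset.range Q,
              (h (P0 + u) * Complex.exp (-(c * (m : ℂ) * (u : ℂ) / Q)) / Q) * z m ^ j
              = (h (P0 + u) * Complex.exp (-(c * (j : ℂ) * (k : ℂ) / S)) / Q) *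
                  Complex.exp (c * (m : ℂ) * (((j : ℂ) - u) / Q)) := by
            intro m _
            rw [hz, ← Complex.exp_nat_mul]
            refine exp_shuffle _ _ _ _ _ _ ?_
            rw [hc]; field_simp; ring
          rw [Finset.sum_congr rfl hstep, ← Finset.mul_sum, ortho_aux Q hQ j u hj hu]
      _ = ∑ u ∈ Finset.range Q, h (P0 + u) * Complex.exp (-(c * (u : ℂ) * (k : ℂ) / S)) := by
          refine Finset.sum_congr rfl fun u hu => ?_
          simp only [mul_ite, mul_zero]
          rw [Finset.sum_ite_eq', if_pos hu, div_mul_cancel₀]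
          exact hQc
  rw [hLHS, key, Finset.mul_sum]
  refine Finset.sum_congr rfl fun u _ => ?_
  have hexp : Complex.exp (-(c * ((P0 + u : ℕ) : ℂ) * (k : ℂ) / S))
      = Complex.exp (-(c * (k : ℂ) * (P0 : ℂ) / S)) * Complex.exp (-(c * (u : ℂ) * (k : ℂ) / S)) := by
    rw [← Complex.exp_add]
    congr 1
    push_cast
    field_simp
    ring
  rw [hexp]
  ring
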